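/- Proposition 3.8 (non-ergodic O(1/k) rate in objective value for the degenerate-metric proximal forward–backward iteration): Assume additionally that f is convex (f(y) ≥ f(x) + ⟪∇f(x), y − x⟫ for all x, y) and that ν ≥ β. Let g : H → ℝ, let (x_k) be a sequence in H, and let (u_k) be a sequence in H such that for every k ∈ ℕ: u_k is a subgradient of g at x_{k+1} (g(z) ≥ g(x_{k+1}) + ⟪u_k, z − x_{k+1}⟫ for all z ∈ H) and 0 = ∇f(x_k) + u_k + Q(x_{k+1} − x_k). Let x⋆ ∈ H be a minimizer of f + g (i.e. (f+g)(x⋆) ≤ (f+g)(z) for all z ∈ H). Then for every integer k ≥ 1, (f+g)(x_k) − (f+g)(x⋆) ≤ ⟪Q(x_0 − x⋆), x_0 − x⋆⟫ / (2k). -/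

import Mathlib

open RealInnerProductSpace

set_option linter.unusedVariables false
set_option linter.unusedSectionVars false

lemma spec_lb {H : Type*} [NormedAddCommGroup H] [InnerProductSpace ℝ H]
    (Q : H →L[ℝ] H) (hQsym : ∀ x y : H, ⟪Q x, y⟫ = ⟪x, Q y⟫)
    (hQpos : ∀ x : H, 0 ≤ ⟪Q x, x⟫) (ν : ℝ) (hν : 0 < ν)
    (hνQ : ∀ w ∈ (LinearMap.ker (Q : H →ₗ[ℝ] H))ᗮ, ν * ‖w‖ ≤ ‖Q w‖) :
    ∀ w ∈ (LinearMap.ker (Q : H →ₗ[ℝ] H))ᗮ, ν * ‖w‖ ^ 2 ≤ ⟪Q w, w⟫ := by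
  intro w hw
  rcases eq_or_ne w 0 with rfl | hw0
  · simp
  set K := (LinearMap.ker (Q : H →ₗ[ℝ] H))ᗮ with hK
  have hQmem : ∀ y : H, Q y ∈ K := by
    intro y
    rw [hK, Submodule.mem_orthogonal]
    intro v hv
    have hv0 : Q v = 0 := hv
    rw [real_inner_comm, hQsym, hv0, inner_zero_right]
  set s : Set ℝ := (fun v : H => ⟪Q v, v⟫) '' {v : H | v ∈ K ∧ ‖v‖ = 1} with hs
  have hwu : (‖w‖⁻¹ • w) ∈ K ∧ ‖(‖w‖⁻¹ • w)‖ = 1 := by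
    constructor
    · exact K.smul_mem _ hw
    · rw [norm_smul]
      simp [norm_ne_zero_iff.2 hw0, inv_mul_cancel₀]
  have hsne : s.Nonempty := ⟨_, ⟨_, hwu, rfl⟩⟩
  have hbdd : BddBelow s := by
    refine ⟨0, ?_⟩
    rintro r ⟨v, -, rfl⟩
    exact hQpos v
  set m := sInf s with hm
  have hm0 : 0 ≤ m := le_csInf hsne (by rintro r ⟨v, -, rfl⟩; exact hQpos v)
  -- quadratic lower bound by m on K
  have hquad : ∀ v ∈ K, m * ‖v‖ ^ 2 ≤ ⟪Q v, v⟫ := by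
    intro v hv
    rcases eq_or_ne v 0 with rfl | hv0
    · simp
    have hu : (‖v‖⁻¹ • v) ∈ K ∧ ‖(‖v‖⁻¹ • v)‖ = 1 := by
      constructor
      · exact K.smul_mem _ hv
      · rw [norm_smul]; simp [norm_ne_zero_iff.2 hv0, inv_mul_cancel₀]
    have h1 : m ≤ ⟪Q (‖v‖⁻¹ • v), (‖v‖⁻¹ • v)⟫ := csInf_le hbdd ⟨_, hu, rfl⟩
    have h2 : ⟪Q (‖v‖⁻¹ • v), (‖v‖⁻¹ • v)⟫ = ‖v‖⁻¹ * ‖v‖⁻¹ * ⟪Q v, v⟫ := by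
      rw [map_smul, real_inner_smul_left, real_inner_smul_right]; ring
    have hvn : (0:ℝ) < ‖v‖ := norm_pos_iff.2 hv0
    rw [h2] at h1
    have := mul_le_mul_of_nonneg_left h1 (le_of_lt (by positivity : (0:ℝ) < ‖v‖ ^ 2))
    calc m * ‖v‖ ^ 2 = ‖v‖ ^ 2 * m := by ring
      _ ≤ ‖v‖ ^ 2 * (‖v‖⁻¹ * ‖v‖⁻¹ * ⟪Q v, v⟫) := this
      _ = ⟪Q v, v⟫ := by field_simp
  clear_value s m
  -- main claim: ν ≤ m
  have hnum : ν ≤ m := by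
    by_contra hcon
    push_neg at hcon
    have hkey : ∀ ε : ℝ, 0 < ε → (ν - m) ^ 2 ≤ ‖Q‖ * ε := by
      intro ε hε
      obtain ⟨r, hrs, hr⟩ := exists_lt_of_csInf_lt hsne
        (by rw [← hm]; exact (by linarith : m < m + ε))
      rw [hs] at hrs
      obtain ⟨v, ⟨hvK, hvn⟩, rfl⟩ := hrs
      set y := Q v - m • v with hy
      have hyK : y ∈ K := K.sub_mem (hQmem v) (K.smul_mem _ hvK)
      have he0 : 0 ≤ ⟪Q v, v⟫ - m := by
        have := hquad v hvK; rw [hvn] at this; linarith [this]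
      have heε : ⟪Q v, v⟫ - m < ε := by linarith
      -- ν - m ≤ ‖y‖
      have h1 : ν - m ≤ ‖y‖ := by
        have : ν * ‖v‖ ≤ ‖Q v‖ := hνQ v hvK
        rw [hvn, mul_one] at this
        have h2 : ‖Q v‖ ≤ ‖y‖ + m * ‖v‖ := by
          calc ‖Q v‖ = ‖y + m • v‖ := by rw [hy, sub_add_cancel]
            _ ≤ ‖y‖ + ‖m • v‖ := norm_add_le _ _
            _ = ‖y‖ + |m| * ‖v‖ := by rw [norm_smul]; rfl
            _ = ‖y‖ + m * ‖v‖ := by rw [abs_of_nonneg hm0]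
        rw [hvn, mul_one] at h2
        linarith
      have hrpos : 0 < ‖y‖ := by linarith
      -- bilinear form b(x,z) = ⟪Q x, z⟫ - m ⟪x, z⟫
      have hbnn : ∀ z ∈ K, 0 ≤ ⟪Q z, z⟫ - m * ⟪z, z⟫ := by
        intro z hz
        have := hquad z hz
        rw [real_inner_self_eq_norm_sq]
        linarith
      -- Cauchy-Schwarz expansion with x = v, t • y
      have hexp : ∀ t : ℝ, 0 ≤ (⟪Q v, v⟫ - m) + 2 * t * ‖y‖ ^ 2
          + t ^ 2 * (⟪Q y, y⟫ - m * ⟪y, y⟫) := by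
        intro t
        have := hbnn (v + t • y) (K.add_mem hvK (K.smul_mem _ hyK))
        have hvy : ⟪Q v, y⟫ = ⟪v, Q y⟫ := hQsym v y
        have hbvy : ⟪Q v, y⟫ - m * ⟪v, y⟫ = ‖y‖ ^ 2 := by
          rw [hy]
          rw [show ⟪Q v, Q v - m • v⟫ - m * ⟪v, Q v - m • v⟫
              = ⟪Q v - m • v, Q v - m • v⟫ by
            simp only [inner_sub_left, inner_sub_right, real_inner_smul_left,
              real_inner_smul_right]
            ring]
          rw [real_inner_self_eq_norm_sq]
        have hexp2 : ⟪Q (v + t • y), v + t • y⟫ - m * ⟪v + t • y, v + t • y⟫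
            = (⟪Q v, v⟫ - m * ⟪v, v⟫) + 2 * t * (⟪Q v, y⟫ - m * ⟪v, y⟫)
              + t ^ 2 * (⟪Q y, y⟫ - m * ⟪y, y⟫) := by
          simp only [map_add, map_smul, inner_add_left, inner_add_right,
            real_inner_smul_left, real_inner_smul_right]
          have h3 : ⟪Q y, v⟫ = ⟪y, Q v⟫ := hQsym y v
          have h4 : ⟪y, v⟫ = ⟪v, y⟫ := real_inner_comm v y
          have h5 : ⟪y, Q v⟫ = ⟪Q v, y⟫ := real_inner_comm (Q v) y
          rw [h3, h4, h5]
          ring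
        rw [hexp2, hbvy] at this
        have hvv : ⟪v, v⟫ = 1 := by rw [real_inner_self_eq_norm_sq, hvn]; norm_num
        rw [hvv, mul_one] at this
        linarith
      set q := ⟪Q y, y⟫ - m * ⟪y, y⟫ with hq
      have hq0 : 0 ≤ q := hbnn y hyK
      have hqQ : q ≤ ‖Q‖ * ‖y‖ ^ 2 := by
        have h6 : ⟪Q y, y⟫ ≤ ‖Q y‖ * ‖y‖ := real_inner_le_norm _ _
        have h7 : ‖Q y‖ ≤ ‖Q‖ * ‖y‖ := Q.le_opNorm y
        have h8 : 0 ≤ m * ⟪y, y⟫ := mul_nonneg hm0 (real_inner_self_nonneg)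
        nlinarith [norm_nonneg y]
      set ee := ⟪Q v, v⟫ - m with hee
      rcases eq_or_lt_of_le hq0 with hqz | hqpos
      · exfalso
        have := hexp (-(ee + 1) / (2 * ‖y‖ ^ 2))
        rw [← hqz] at this
        have hy2 : (0:ℝ) < ‖y‖ ^ 2 := by positivity
        have : 0 ≤ ee + 2 * (-(ee + 1) / (2 * ‖y‖ ^ 2)) * ‖y‖ ^ 2 := by linarith [this]
        rw [show 2 * (-(ee + 1) / (2 * ‖y‖ ^ 2)) * ‖y‖ ^ 2 = -(ee+1) by field_simp] at this
        linarith
      · -- q > 0 : take t = -‖y‖^2 / q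
        have := hexp (-(‖y‖ ^ 2) / q)
        have h9 : (‖y‖ ^ 2) ^ 2 ≤ ee * q := by
          have hq' : q ≠ 0 := ne_of_gt hqpos
          have expand : ee + 2 * (-(‖y‖ ^ 2) / q) * ‖y‖ ^ 2 + (-(‖y‖ ^ 2) / q) ^ 2 * q
              = ee - (‖y‖ ^ 2) ^ 2 / q := by field_simp; ring
          rw [expand] at this
          have := (div_le_iff₀ hqpos).1 (by linarith : (‖y‖ ^ 2) ^ 2 / q ≤ ee)
          linarith
        have h10 : (‖y‖ ^ 2) ^ 2 ≤ ee * (‖Q‖ * ‖y‖ ^ 2) :=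
          le_trans h9 (mul_le_mul_of_nonneg_left hqQ he0)
        have h11 : ‖y‖ ^ 2 ≤ ee * ‖Q‖ := by
          have hy2 : (0:ℝ) < ‖y‖ ^ 2 := by positivity
          nlinarith
        have h12 : (ν - m) ^ 2 ≤ ‖y‖ ^ 2 := by nlinarith
        have hQn : 0 ≤ ‖Q‖ := norm_nonneg _
        nlinarith
    -- conclude (ν - m)^2 ≤ 0
    have hfin : (ν - m) ^ 2 ≤ 0 := by
      by_contra hpos
      push_neg at hpos
      have hQn : 0 ≤ ‖Q‖ := norm_nonneg _
      have hk2 := hkey ((ν - m) ^ 2 / (2 * (‖Q‖ + 1))) (by positivity)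
      have e1 : ‖Q‖ * ((ν - m) ^ 2 / (2 * (‖Q‖ + 1))) = (ν - m) ^ 2 * (‖Q‖ / (2 * (‖Q‖ + 1))) := by
        ring
      have e2 : ‖Q‖ / (2 * (‖Q‖ + 1)) ≤ 1 / 2 := by
        rw [div_le_div_iff₀ (by positivity) (by norm_num : (0:ℝ) < 2)]
        linarith
      have e3 : (ν - m) ^ 2 * (‖Q‖ / (2 * (‖Q‖ + 1))) ≤ (ν - m) ^ 2 * (1 / 2) :=
        mul_le_mul_of_nonneg_left e2 (le_of_lt hpos)
      rw [e1] at hk2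
      linarith
    have : 0 < (ν - m) ^ 2 := pow_pos (by linarith) 2
    linarith
  calc ν * ‖w‖ ^ 2 ≤ m * ‖w‖ ^ 2 := mul_le_mul_of_nonneg_right hnum (sq_nonneg _)
    _ ≤ ⟪Q w, w⟫ := hquad w hw

section
variable {H : Type*} [NormedAddCommGroup H] [InnerProductSpace ℝ H] [CompleteSpace H]
variable (Q : H →L[ℝ] H) (β : ℝ) (f : H → ℝ) (f' : H → H)

lemma lip_aux (hβ : 0 ≤ β)
    (hcoco : ∀ x y : H, ‖f' x - f' y‖ ^ 2 ≤ β * ⟪f' x - f' y, x - y⟫) :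
    ∀ a b : H, ‖f' a - f' b‖ ≤ β * ‖a - b‖ := by
  intro a b
  rcases eq_or_lt_of_le (norm_nonneg (f' a - f' b)) with h0 | h0
  · rw [← h0]; positivity
  have h1 := hcoco a b
  have h2 : ⟪f' a - f' b, a - b⟫ ≤ ‖f' a - f' b‖ * ‖a - b‖ := real_inner_le_norm _ _
  have h3 : ‖f' a - f' b‖ ^ 2 ≤ β * (‖f' a - f' b‖ * ‖a - b‖) := by
    calc ‖f' a - f' b‖ ^ 2 ≤ β * ⟪f' a - f' b, a - b⟫ := h1
      _ ≤ β * (‖f' a - f' b‖ * ‖a - b‖) := mul_le_mul_of_nonneg_left h2 hβ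
  nlinarith

lemma grad_orth (hQsym : ∀ x y : H, ⟪Q x, y⟫ = ⟪x, Q y⟫)
    (hranf' : Set.range f' ⊆ Set.range Q) :
    ∀ a p : H, Q p = 0 → ⟪f' a, p⟫ = 0 := by
  intro a p hp
  obtain ⟨v, hv⟩ := hranf' ⟨a, rfl⟩
  rw [← hv, hQsym, hp, inner_zero_right]

lemma f_ker_inv (hQsym : ∀ x y : H, ⟪Q x, y⟫ = ⟪x, Q y⟫)
    (hranf' : Set.range f' ⊆ Set.range Q)
    (hfconvex : ∀ x y : H, f x + ⟪f' x, y - x⟫ ≤ f y) :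
    ∀ a p : H, Q p = 0 → f (a + p) = f a := by
  intro a p hp
  have h1 := hfconvex a (a + p)
  have h2 := hfconvex (a + p) a
  rw [add_sub_cancel_left, grad_orth Q f' hQsym hranf' a p hp] at h1
  rw [show a - (a + p) = -p by abel, inner_neg_right,
    grad_orth Q f' hQsym hranf' (a + p) p hp] at h2
  simp at h1 h2
  linarith

lemma descent (hβ : 0 ≤ β) (hf : ∀ x : H, HasGradientAt f (f' x) x)
    (hcoco : ∀ x y : H, ‖f' x - f' y‖ ^ 2 ≤ β * ⟪f' x - f' y, x - y⟫) :
    ∀ a w : H, f (a + w) ≤ f a + ⟪f' a, w⟫ + β / 2 * ‖w‖ ^ 2 := by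
  intro a w
  set φ : ℝ → ℝ := fun t => f (a + t • w) - t * ⟪f' a, w⟫ - β / 2 * t ^ 2 * ‖w‖ ^ 2 with hφdef
  have hφ : ∀ t : ℝ, HasDerivAt φ
      (⟪f' (a + t • w), w⟫ - ⟪f' a, w⟫ - β * t * ‖w‖ ^ 2) t := by
    intro t
    have hc : HasDerivAt (fun s : ℝ => a + s • w) w t := by
      simpa using ((hasDerivAt_id t).smul_const w).const_add a
    have h1 : HasDerivAt (fun s : ℝ => f (a + s • w)) ⟪f' (a + t • w), w⟫ t := by
      have := (hf (a + t • w)).hasFDerivAt.comp_hasDerivAt t hc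
      simpa [InnerProductSpace.toDual_apply_apply, Function.comp_def] using this
    have h2 : HasDerivAt (fun s : ℝ => s * ⟪f' a, w⟫) ⟪f' a, w⟫ t := by
      simpa using (hasDerivAt_id t).mul_const ⟪f' a, w⟫
    have h3 : HasDerivAt (fun s : ℝ => β / 2 * s ^ 2 * ‖w‖ ^ 2)
        (β * t * ‖w‖ ^ 2) t := by
      have := ((hasDerivAt_pow 2 t).const_mul (β / 2)).mul_const (‖w‖ ^ 2)
      refine this.congr_deriv ?_
      rw [show (2:ℕ) - 1 = 1 from rfl]; push_cast
      ring
    exact (h1.sub h2).sub h3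
  have hderiv_nonpos : ∀ t ∈ Set.Ioo (0:ℝ) 1,
      deriv φ t ≤ 0 := by
    intro t ht
    rw [(hφ t).deriv]
    have hlip := lip_aux β f' hβ hcoco (a + t • w) a
    rw [show a + t • w - a = t • w by abel] at hlip
    have h4 : ⟪f' (a + t • w), w⟫ - ⟪f' a, w⟫ = ⟪f' (a + t • w) - f' a, w⟫ := by
      rw [inner_sub_left]
    have h5 : ⟪f' (a + t • w) - f' a, w⟫ ≤ ‖f' (a + t • w) - f' a‖ * ‖w‖ :=
      real_inner_le_norm _ _
    have h6 : ‖t • w‖ = t * ‖w‖ := by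
      rw [norm_smul, Real.norm_eq_abs, abs_of_pos ht.1]
    have h7 : ‖f' (a + t • w) - f' a‖ * ‖w‖ ≤ β * t * ‖w‖ * ‖w‖ := by
      rw [h6] at hlip
      have := mul_le_mul_of_nonneg_right hlip (norm_nonneg w)
      calc ‖f' (a + t • w) - f' a‖ * ‖w‖ ≤ β * (t * ‖w‖) * ‖w‖ := this
        _ = β * t * ‖w‖ * ‖w‖ := by ring
    have : ⟪f' (a + t • w), w⟫ - ⟪f' a, w⟫ ≤ β * t * ‖w‖ ^ 2 := by
      rw [h4]
      calc ⟪f' (a + t • w) - f' a, w⟫ ≤ β * t * ‖w‖ * ‖w‖ := le_trans h5 h7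
        _ = β * t * ‖w‖ ^ 2 := by ring
    linarith
  have hcont : ContinuousOn φ (Set.Icc 0 1) :=
    fun t _ => ((hφ t).continuousAt).continuousWithinAt
  have hanti : AntitoneOn φ (Set.Icc 0 1) := by
    apply antitoneOn_of_deriv_nonpos (convex_Icc 0 1) hcont
    · exact fun t _ => ((hφ t).differentiableAt).differentiableWithinAt
    · rw [interior_Icc]; exact hderiv_nonpos
  have := hanti (Set.mem_Icc.2 ⟨le_refl 0, zero_le_one⟩)
    (Set.mem_Icc.2 ⟨zero_le_one, le_refl 1⟩) zero_le_one
  have hφ0 : φ 0 = f a := by simp [hφdef]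
  have hφ1 : φ 1 = f (a + w) - ⟪f' a, w⟫ - β / 2 * ‖w‖ ^ 2 := by
    simp [hφdef]
  rw [hφ0, hφ1] at this
  linarith
end

section
variable {H : Type*} [NormedAddCommGroup H] [InnerProductSpace ℝ H] [CompleteSpace H]

lemma grad_orth' (Q : H →L[ℝ] H) (f' : H → H)
    (hQsym : ∀ x y : H, ⟪Q x, y⟫ = ⟪x, Q y⟫)
    (hranf' : Set.range f' ⊆ Set.range Q) :
    ∀ a p : H, Q p = 0 → ⟪f' a, p⟫ = 0 := by
  intro a p hp
  obtain ⟨v, hv⟩ := hranf' ⟨a, rfl⟩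
  rw [← hv, hQsym, hp, inner_zero_right]

lemma step_ineq (Q : H →L[ℝ] H)
    (hQsym : ∀ x y : H, ⟪Q x, y⟫ = ⟪x, Q y⟫)
    (hQpos : ∀ x : H, 0 ≤ ⟪Q x, x⟫)
    (ν : ℝ) (hν : 0 < ν)
    (hνQ : ∀ w ∈ (LinearMap.ker (Q : H →ₗ[ℝ] H))ᗮ, ν * ‖w‖ ≤ ‖Q w‖)
    (β : ℝ) (hβ : 0 ≤ β) (hνβ : β ≤ ν)
    (f : H → ℝ) (f' : H → H)
    (hranf' : Set.range f' ⊆ Set.range Q)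
    (hfconvex : ∀ x y : H, f x + ⟪f' x, y - x⟫ ≤ f y)
    (hdescent : ∀ a w : H, f (a + w) ≤ f a + ⟪f' a, w⟫ + β / 2 * ‖w‖ ^ 2)
    (hkerinv : ∀ a p : H, Q p = 0 → f (a + p) = f a)
    (hspec : ∀ w ∈ (LinearMap.ker (Q : H →ₗ[ℝ] H))ᗮ, ν * ‖w‖ ^ 2 ≤ ⟪Q w, w⟫)
    (g : H → ℝ) (x u : ℕ → H)
    (hsub : ∀ k : ℕ, ∀ z : H, g (x (k + 1)) + ⟪u k, z - x (k + 1)⟫ ≤ g z)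
    (hopt : ∀ k : ℕ, 0 = f' (x k) + u k + Q (x (k + 1) - x k))
    (k : ℕ) (z : H) :
    (f (x (k + 1)) + g (x (k + 1))) - (f z + g z) ≤
      (⟪Q (x k - z), x k - z⟫ - ⟪Q (x (k + 1) - z), x (k + 1) - z⟫) / 2 := by
  haveI : CompleteSpace (LinearMap.ker (Q : H →ₗ[ℝ] H)) := Q.isClosed_ker.completeSpace_coe
  set d := x (k + 1) - x k with hd
  set p : H := ((LinearMap.ker (Q : H →ₗ[ℝ] H)).orthogonalProjectionOnto d : H) with hp
  have hpker : Q p = 0 := by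
    have := ((LinearMap.ker (Q : H →ₗ[ℝ] H)).orthogonalProjectionOnto d).2
    exact this
  set w := d - p with hwdef
  have hw : w ∈ (LinearMap.ker (Q : H →ₗ[ℝ] H))ᗮ := (LinearMap.ker (Q : H →ₗ[ℝ] H)).sub_starProjection_mem_orthogonal d
  have hx1 : x (k + 1) = (x k + w) + p := by
    rw [hwdef, hd]; abel
  have h1 : f (x (k + 1)) = f (x k + w) := by
    rw [hx1]; exact hkerinv (x k + w) p hpker
  have h2 : f (x k + w) ≤ f (x k) + ⟪f' (x k), w⟫ + β / 2 * ‖w‖ ^ 2 := hdescent (x k) w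
  have h3 : ⟪f' (x k), w⟫ = ⟪f' (x k), d⟫ := by
    rw [hwdef, inner_sub_right, grad_orth' Q f' hQsym hranf' (x k) p hpker, sub_zero]
  have h4 : f (x k) + ⟪f' (x k), z - x k⟫ ≤ f z := hfconvex (x k) z
  have h5 : g (x (k + 1)) + ⟪u k, z - x (k + 1)⟫ ≤ g z := hsub k z
  have h6 : f' (x k) + u k = -(Q d) := by
    have h := hopt k
    rw [← hd] at h
    have h2 : (f' (x k) + u k) + Q d = 0 := by rw [add_assoc] at h; rw [← add_assoc] at h; exact h.symm
    exact eq_neg_of_add_eq_zero_left h2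
  -- scalar consequence of optimality
  have h7 : ⟪f' (x k), x (k + 1) - z⟫ + ⟪u k, x (k + 1) - z⟫
      = -⟪Q d, x (k + 1) - z⟫ := by
    rw [← inner_add_left, h6, inner_neg_left]
  have h8 : ⟪f' (x k), x (k + 1) - z⟫ = ⟪f' (x k), d⟫ - ⟪f' (x k), z - x k⟫ := by
    rw [show x (k + 1) - z = d - (z - x k) by rw [hd]; abel, inner_sub_right]
  have h9 : ⟪u k, x (k + 1) - z⟫ = -⟪u k, z - x (k + 1)⟫ := by
    rw [show x (k + 1) - z = -(z - x (k + 1)) by abel, inner_neg_right]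
  -- three point identity
  have h10 : ⟪Q (x k - z), x k - z⟫
      = ⟪Q (x (k + 1) - z), x (k + 1) - z⟫ - 2 * ⟪Q d, x (k + 1) - z⟫ + ⟪Q d, d⟫ := by
    have hb : x k - z = (x (k + 1) - z) - d := by rw [hd]; abel
    rw [hb, map_sub]
    simp only [inner_sub_left, inner_sub_right]
    have e1 : ⟪Q (x (k + 1) - z), d⟫ = ⟪x (k + 1) - z, Q d⟫ := hQsym _ _
    have e2 : ⟪x (k + 1) - z, Q d⟫ = ⟪Q d, x (k + 1) - z⟫ := real_inner_comm _ _
    rw [e1, e2]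
    simp only [inner_sub_right]
    ring
  -- curvature bound
  have h11 : β * ‖w‖ ^ 2 ≤ ⟪Q d, d⟫ := by
    have hs1 : ν * ‖w‖ ^ 2 ≤ ⟪Q w, w⟫ := hspec w hw
    have hs2 : β * ‖w‖ ^ 2 ≤ ν * ‖w‖ ^ 2 := mul_le_mul_of_nonneg_right hνβ (sq_nonneg _)
    have hQw : Q w = Q d := by rw [hwdef, map_sub, hpker, sub_zero]
    have hs3 : ⟪Q w, w⟫ = ⟪Q d, d⟫ := by
      rw [hQw, hwdef, inner_sub_right]
      have : ⟪Q d, p⟫ = 0 := by rw [hQsym, hpker, inner_zero_right]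
      rw [this, sub_zero]
    linarith
  linarith
end

set_option maxHeartbeats 800000 in
/-- Proposition 3.8: non-ergodic `O(1/k)` rate in objective value for the
degenerate-metric proximal forward–backward iteration. -/
theorem stmt_18
    {H : Type*} [NormedAddCommGroup H] [InnerProductSpace ℝ H] [CompleteSpace H]
    (Q : H →L[ℝ] H)
    (hQsym : ∀ x y : H, ⟪Q x, y⟫ = ⟪x, Q y⟫)
    (hQpos : ∀ x : H, 0 ≤ ⟪Q x, x⟫)
    (ν : ℝ) (hν : 0 < ν)
    (hνQ : ∀ w ∈ (LinearMap.ker (Q : H →ₗ[ℝ] H))ᗮ, ν * ‖w‖ ≤ ‖Q w‖)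
    (β : ℝ) (hβ : 0 ≤ β)
    (hνβ : β ≤ ν)
    (f : H → ℝ) (f' : H → H)
    (hf : ∀ x : H, HasGradientAt f (f' x) x)
    (hranf' : Set.range f' ⊆ Set.range Q)
    (hcoco : ∀ x y : H, ‖f' x - f' y‖ ^ 2 ≤ β * ⟪f' x - f' y, x - y⟫)
    (hfconvex : ∀ x y : H, f x + ⟪f' x, y - x⟫ ≤ f y)
    (g : H → ℝ) (x u : ℕ → H)
    (hsub : ∀ k : ℕ, ∀ z : H, g (x (k + 1)) + ⟪u k, z - x (k + 1)⟫ ≤ g z)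
    (hopt : ∀ k : ℕ, 0 = f' (x k) + u k + Q (x (k + 1) - x k))
    (xs : H) (hxs : ∀ z : H, f xs + g xs ≤ f z + g z) :
    ∀ k : ℕ, 1 ≤ k →
      (f (x k) + g (x k)) - (f xs + g xs) ≤
        ⟪Q (x 0 - xs), x 0 - xs⟫ / (2 * (k : ℝ)) := by
  intro k hk
  have hdescent := descent β f f' hβ hf hcoco
  have hkerinv := f_ker_inv Q f f' hQsym hranf' hfconvex
  have hspec := spec_lb Q hQsym hQpos ν hν hνQ
  have hstep := fun (j : ℕ) (z : H) =>
    step_ineq Q hQsym hQpos ν hν hνQ β hβ hνβ f f' hranf' hfconvex hdescent hkerinv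
      hspec g x u hsub hopt j z
  have hmono : ∀ j : ℕ, (f (x (j + 1)) + g (x (j + 1))) - (f xs + g xs)
      ≤ (f (x j) + g (x j)) - (f xs + g xs) := by
    intro j
    have h := hstep j (x j)
    simp only [sub_self, map_zero, inner_zero_left] at h
    have hA := hQpos (x (j + 1) - x j)
    linarith
  have hkey : ∀ j : ℕ, (j : ℝ) * ((f (x j) + g (x j)) - (f xs + g xs))
      ≤ (⟪Q (x 0 - xs), x 0 - xs⟫ - ⟪Q (x j - xs), x j - xs⟫) / 2 := by
    intro j
    induction j with
    | zero => simp
    | succ j ih =>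
      have h1 := hstep j xs
      have h2 := hmono j
      have h3 := mul_le_mul_of_nonneg_left h2 (by positivity : (0:ℝ) ≤ (j : ℝ))
      push_cast
      linarith
  have hkpos : (0:ℝ) < (k : ℝ) := by
    have : (1:ℝ) ≤ (k : ℝ) := by exact_mod_cast hk
    linarith
  rw [le_div_iff₀ (by positivity : (0:ℝ) < 2 * (k : ℝ))]
  have h4 := hkey k
  have h5 := hQpos (x k - xs)
  nlinarith [h4, h5]
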